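/- arXiv:2103.10808 — 2 statements merged into one kernel-verified Lean document; each statement's English description precedes it below -/
import Mathlib

section
/- There exists a bipartite labelled acyclic directed graph B(X,Y) with all arcs directed from X to Y and all arcs carrying the same label, which is not complete bipartite, such that B(X,Y) is NOT isomorphic to (B(X,Y)/Y) \boxbackslash (B(X,Y)/X). Concretely, take X = {u_1, u_2}, Y = {v_1, v_2, v_3} and arcs u_1\to v_2, u_1\to v_3, u_2\to v_1, u_2\to v_2, u_2\to v_3, all with the same label: then (B(X,Y)/Y) \boxbackslash (B(X,Y)/X) has 6 arcs while B(X,Y) has 5, so they are not isomorphic. -/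
/-- A labelled directed multigraph: vertex type `V`, arc type `A`, label type `L`,
incidence function `mu` giving (tail, head), and arc labelling `lab`. -/
structure LDMG (V A L : Type) where
  mu : A → V × V
  lab : A → L

namespace LDMG

variable {V A L V' A' : Type}

/-- The one-step arc relation. -/
def step (G : LDMG V A L) (u v : V) : Prop := ∃ a, G.mu a = (u, v)

/-- `G` is acyclic: no directed cycle. -/
def Acyclic (G : LDMG V A L) : Prop := ∀ v, ¬ Relation.TransGen G.step v v

/-- `v` has in-degree 0 in `G`. -/
def InDegZero (G : LDMG V A L) (v : V) : Prop := ∀ a, (G.mu a).2 ≠ v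

/-- `v` has out-degree 0 in `G`. -/
def OutDegZero (G : LDMG V A L) (v : V) : Prop := ∀ a, (G.mu a).1 ≠ v

/-- `peel G n`: the set of vertices deleted after `n` rounds of repeatedly removing the
vertices of in-degree 0 (together with the arcs with tails there). -/
def peel (G : LDMG V A L) : ℕ → Set V
  | 0 => ∅
  | n + 1 => peel G n ∪ {v | ∀ a, (G.mu a).2 = v → (G.mu a).1 ∈ peel G n}

/-- The level set `S^n(G)`. -/
def levelSet (G : LDMG V A L) (n : ℕ) : Set V := peel G (n + 1) \ peel G n

/-- Vertex type of the contraction `G/X`: the vertices outside `X` together with one new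
vertex (`Sum.inr ()`) replacing `X`. -/
def CVertex (X : Set V) : Type := {v : V // v ∉ X} ⊕ Unit

/-- Canonical projection of vertices to contraction vertices. -/
noncomputable def cMap (X : Set V) (v : V) : CVertex X :=
  haveI := Classical.propDecidable (v ∈ X)
  if h : v ∈ X then Sum.inr () else Sum.inl ⟨v, h⟩

/-- The arcs of `G` surviving the contraction of `X` (i.e. not having both ends in `X`),
before identification of parallel equally-labelled arcs. -/
def CPre (G : LDMG V A L) (X : Set V) : Type :=
  {a : A // ¬ ((G.mu a).1 ∈ X ∧ (G.mu a).2 ∈ X)}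

noncomputable def cKey (G : LDMG V A L) (X : Set V) (a : CPre G X) :
    (CVertex X × CVertex X) × L :=
  ((cMap X (G.mu a.1).1, cMap X (G.mu a.1).2), G.lab a.1)

/-- Arc type of `G/X`: surviving arcs, with arcs having identical tail, head and label
identified. -/
def CArc (G : LDMG V A L) (X : Set V) : Type :=
  Quotient (Setoid.ker (cKey G X))

/-- The contraction `G/X`. -/
noncomputable def contract (G : LDMG V A L) (X : Set V) : LDMG (CVertex X) (CArc G X) L where
  mu := Quotient.lift (fun a => (cKey G X a).1) (fun _ _ h => congrArg Prod.fst h)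
  lab := Quotient.lift (fun a => (cKey G X a).2) (fun _ _ h => congrArg Prod.snd h)

/-- The Cartesian product `G □ H`. -/
def box (G : LDMG V A L) (H : LDMG V' A' L) : LDMG (V × V') (A × V' ⊕ V × A') L where
  mu := fun x =>
    match x with
    | Sum.inl (a, w) => (((G.mu a).1, w), ((G.mu a).2, w))
    | Sum.inr (u, b) => ((u, (H.mu b).1), (u, (H.mu b).2))
  lab := fun x =>
    match x with
    | Sum.inl (a, _) => G.lab a
    | Sum.inr (_, b) => H.lab b

/-- The label `ℓ` occurs in `G`. -/
def HasLab (G : LDMG V A L) (ℓ : L) : Prop := ∃ a, G.lab a = ℓ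

/-- Arc type of the intermediate product `G ⊠ H`: asynchronous copies of arcs of `G`
(whose label does not occur in `H`), asynchronous copies of arcs of `H` (whose label
does not occur in `G`), and synchronous arcs for pairs of equally labelled arcs. -/
def InterArc (G : LDMG V A L) (H : LDMG V' A' L) : Type :=
  {p : A × V' // ¬ H.HasLab (G.lab p.1)} ⊕
  {p : V × A' // ¬ G.HasLab (H.lab p.2)} ⊕
  {p : A × A' // G.lab p.1 = H.lab p.2}

/-- The intermediate product `G ⊠ H`. -/
def inter (G : LDMG V A L) (H : LDMG V' A' L) : LDMG (V × V') (InterArc G H) L where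
  mu := fun x =>
    match x with
    | Sum.inl ⟨(a, w), _⟩ => (((G.mu a).1, w), ((G.mu a).2, w))
    | Sum.inr (Sum.inl ⟨(u, b), _⟩) => ((u, (H.mu b).1), (u, (H.mu b).2))
    | Sum.inr (Sum.inr ⟨(a, b), _⟩) => (((G.mu a).1, (H.mu b).1), ((G.mu a).2, (H.mu b).2))
  lab := fun x =>
    match x with
    | Sum.inl ⟨(a, _), _⟩ => G.lab a
    | Sum.inr (Sum.inl ⟨(_, b), _⟩) => H.lab b
    | Sum.inr (Sum.inr ⟨(a, _), _⟩) => G.lab a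

/-- `v` has positive level in `G □ H`, i.e. some in-arc in the Cartesian product. -/
def PosLevelBox (G : LDMG V A L) (H : LDMG V' A' L) (v : V × V') : Prop :=
  ∃ x, ((G.box H).mu x).2 = v

/-- The set of vertices removed after `n` rounds of the VRSP removal process: repeatedly
remove the vertices having in-degree 0 in the current graph but positive level in `G □ H`
(together with their out-arcs). -/
def vrspRem (G : LDMG V A L) (H : LDMG V' A' L) : ℕ → Set (V × V')
  | 0 => ∅
  | n + 1 => vrspRem G H n ∪
      {v | PosLevelBox G H v ∧
        ∀ x, ((G.inter H).mu x).2 = v → ((G.inter H).mu x).1 ∈ vrspRem G H n}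

/-- All vertices eventually removed in the VRSP removal process. -/
def vrspRemoved (G : LDMG V A L) (H : LDMG V' A' L) : Set (V × V') := ⋃ n, vrspRem G H n

/-- Vertex type of the vertex-removing synchronised product `G ⊟ H`. -/
def VrspV (G : LDMG V A L) (H : LDMG V' A' L) : Type := {v : V × V' // v ∉ vrspRemoved G H}

/-- Arc type of `G ⊟ H`: arcs of `G ⊠ H` with both ends surviving. -/
def VrspArc (G : LDMG V A L) (H : LDMG V' A' L) : Type :=
  {x : InterArc G H // ((G.inter H).mu x).1 ∉ vrspRemoved G H ∧
    ((G.inter H).mu x).2 ∉ vrspRemoved G H}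

/-- The vertex-removing synchronised product `G ⊟ H`. -/
def vrsp (G : LDMG V A L) (H : LDMG V' A' L) : LDMG (VrspV G H) (VrspArc G H) L where
  mu := fun x => (⟨((G.inter H).mu x.1).1, x.2.1⟩, ⟨((G.inter H).mu x.1).2, x.2.2⟩)
  lab := fun x => (G.inter H).lab x.1

/-- Isomorphism of labelled directed multigraphs: a vertex bijection preserving the
existence of arcs together with their labels. -/
def Iso (G : LDMG V A L) {V' A' : Type} (H : LDMG V' A' L) : Prop :=
  ∃ φ : V ≃ V', ∀ u v ℓ,
    (∃ a, G.mu a = (u, v) ∧ G.lab a = ℓ) ↔ (∃ b, H.mu b = (φ u, φ v) ∧ H.lab b = ℓ)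

end LDMG

/-- The concrete incomplete bipartite counterexample: parts `X = {0, 1}` (for `u₁, u₂`)
and `Y = {2, 3, 4}` (for `v₁, v₂, v₃`), arcs `u₁→v₂, u₁→v₃, u₂→v₁, u₂→v₂, u₂→v₃`, all
with the same label. -/
def Bex : LDMG (Fin 5) (Fin 5) Unit where
  mu := ![((0 : Fin 5), (3 : Fin 5)), (0, 4), (1, 2), (1, 3), (1, 4)]
  lab := fun _ => ()

def Xex : Set (Fin 5) := {0, 1}

def Yex : Set (Fin 5) := {2, 3, 4}


section Aux
open LDMG

lemma Xex_iff (i : Fin 5) : i ∈ Xex ↔ i = 0 ∨ i = 1 := by simp [Xex]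

lemma Yex_iff (i : Fin 5) : i ∈ Yex ↔ i = 2 ∨ i = 3 ∨ i = 4 := by simp [Yex]

lemma cMap_pos {V : Type} {X : Set V} {v : V} (h : v ∈ X) : cMap X v = Sum.inr () := dif_pos h

lemma cMap_neg {V : Type} {X : Set V} {v : V} (h : v ∉ X) : cMap X v = Sum.inl ⟨v, h⟩ :=
  dif_neg h

lemma bex_facts : ∀ i : Fin 5,
    (Bex.mu i).1 ∈ Xex ∧ (Bex.mu i).2 ∈ Yex ∧ (Bex.mu i).1 ∉ Yex ∧ (Bex.mu i).2 ∉ Xex := by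
  intro i
  fin_cases i <;> simp [Bex, Xex_iff, Yex_iff]


open LDMG in
lemma bex_tail_head : ∀ i : Fin 5, (Bex.mu i).1.val ≤ 1 ∧ 2 ≤ (Bex.mu i).2.val := by decide

open LDMG in
lemma bex_not02 : ∀ i : Fin 5, Bex.mu i ≠ ((0 : Fin 5), (2 : Fin 5)) := by decide

open LDMG in
lemma bex_mu_notX : ∀ i : Fin 5, i ∉ Xex → Bex.mu i = (1, i) := by
  intro i hi
  fin_cases i <;> simp [Xex_iff] at hi ⊢ <;> rfl

/-- surviving arcs of the contraction of `Yex` -/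
def aY (i : Fin 5) : LDMG.CPre Bex Yex := ⟨i, fun h => (bex_facts i).2.2.1 h.1⟩

/-- surviving arcs of the contraction of `Xex` -/
def aX (i : Fin 5) : LDMG.CPre Bex Xex := ⟨i, fun h => (bex_facts i).2.2.2 h.2⟩

noncomputable def qY (i : Fin 5) : LDMG.CArc Bex Yex := Quotient.mk _ (aY i)

noncomputable def qX (i : Fin 5) : LDMG.CArc Bex Xex := Quotient.mk _ (aX i)

open LDMG in
lemma keyY (i : Fin 5) : cKey Bex Yex (aY i) =
    ((Sum.inl ⟨(Bex.mu i).1, (bex_facts i).2.2.1⟩, Sum.inr ()), ()) := by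
  show ((cMap Yex (Bex.mu i).1, cMap Yex (Bex.mu i).2), ()) = _
  rw [cMap_neg ((bex_facts i).2.2.1), cMap_pos ((bex_facts i).2.1)]; rfl

open LDMG in
lemma keyX (i : Fin 5) : cKey Bex Xex (aX i) =
    ((Sum.inr (), Sum.inl ⟨(Bex.mu i).2, (bex_facts i).2.2.2⟩), ()) := by
  show ((cMap Xex (Bex.mu i).1, cMap Xex (Bex.mu i).2), ()) = _
  rw [cMap_pos ((bex_facts i).1), cMap_neg ((bex_facts i).2.2.2)]; rfl

open LDMG in
lemma carcY_ind {motive : CArc Bex Yex → Prop} (h : ∀ i : Fin 5, motive (qY i))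
    (α : CArc Bex Yex) : motive α := by
  induction α using Quotient.ind with
  | _ a => exact h a.1

open LDMG in
lemma carcX_ind {motive : CArc Bex Xex → Prop} (h : ∀ i : Fin 5, motive (qX i))
    (α : CArc Bex Xex) : motive α := by
  induction α using Quotient.ind with
  | _ a => exact h a.1

open LDMG in
lemma G_mu_qY (i : Fin 5) : (Bex.contract Yex).mu (qY i) =
    (Sum.inl ⟨(Bex.mu i).1, (bex_facts i).2.2.1⟩, Sum.inr ()) :=
  congrArg Prod.fst (keyY i)

open LDMG in
lemma H_mu_qX (i : Fin 5) : (Bex.contract Xex).mu (qX i) =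
    (Sum.inr (), Sum.inl ⟨(Bex.mu i).2, (bex_facts i).2.2.2⟩) :=
  congrArg Prod.fst (keyX i)

open LDMG in
lemma G_head (α : CArc Bex Yex) : ((Bex.contract Yex).mu α).2 = Sum.inr () := by
  induction α using carcY_ind with
  | _ i => rw [G_mu_qY]

open LDMG in
lemma G_tail_left (α : CArc Bex Yex) : ((Bex.contract Yex).mu α).1.isRight = false := by
  induction α using carcY_ind with
  | _ i => rw [G_mu_qY]; rfl

open LDMG in
lemma H_tail (β : CArc Bex Xex) : ((Bex.contract Xex).mu β).1 = Sum.inr () := by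
  induction β using carcX_ind with
  | _ i => rw [H_mu_qX]

open LDMG in
lemma H_head_left (β : CArc Bex Xex) : ((Bex.contract Xex).mu β).2.isRight = false := by
  induction β using carcX_ind with
  | _ i => rw [H_mu_qX]; rfl

open LDMG in
instance : IsEmpty {p : CArc Bex Yex × CVertex Xex //
    ¬ (Bex.contract Xex).HasLab ((Bex.contract Yex).lab p.1)} :=
  ⟨fun p => p.2 ⟨qX 0, Subsingleton.elim _ _⟩⟩

open LDMG in
instance : IsEmpty {p : CVertex Yex × CArc Bex Xex //
    ¬ (Bex.contract Yex).HasLab ((Bex.contract Xex).lab p.2)} :=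
  ⟨fun p => p.2 ⟨qY 0, Subsingleton.elim _ _⟩⟩

open LDMG in
/-- the synchronous arcs of the intermediate product -/
def sy (α : CArc Bex Yex) (β : CArc Bex Xex) :
    InterArc (Bex.contract Yex) (Bex.contract Xex) :=
  Sum.inr (Sum.inr ⟨(α, β), Subsingleton.elim _ _⟩)

open LDMG in
lemma inter_mu_sy (α : CArc Bex Yex) (β : CArc Bex Xex) :
    ((Bex.contract Yex).inter (Bex.contract Xex)).mu (sy α β) =
      ((((Bex.contract Yex).mu α).1, ((Bex.contract Xex).mu β).1),
       (((Bex.contract Yex).mu α).2, ((Bex.contract Xex).mu β).2)) := rfl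

open LDMG in
/-- every arc of the intermediate product is synchronous -/
lemma inter_arc_cases (x : InterArc (Bex.contract Yex) (Bex.contract Xex)) :
    ∃ α β, x = sy α β := by
  rcases x with e | e | ⟨⟨α, β⟩, h⟩
  · exact absurd ⟨qX 0, Subsingleton.elim _ _⟩ e.2
  · exact absurd ⟨qY 0, Subsingleton.elim _ _⟩ e.2
  · exact ⟨α, β, by simp [sy]; rfl⟩

/-- the removed vertices are exactly the "bad" ones -/
def Bad (p : LDMG.CVertex Yex × LDMG.CVertex Xex) : Prop := p.1.isRight = p.2.isRight

open LDMG in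
lemma rem_sub_bad : ∀ n, ∀ p ∈ vrspRem (Bex.contract Yex) (Bex.contract Xex) n, Bad p := by
  intro n
  induction n with
  | zero => intro p hp; exact absurd hp (by simp [vrspRem])
  | succ n ih =>
    rintro ⟨p1, p2⟩ (hp | ⟨hpos, hin⟩)
    · exact ih _ hp
    · by_contra hb
      rcases p1 with u | u
      · rcases p2 with y | y
        · exact hb rfl
        · -- p = (inl u, inr) : no in-arc in the box product
          obtain ⟨x, hx⟩ := hpos
          rcases x with ⟨α, w⟩ | ⟨u', β⟩
          · have h1 := congrArg Prod.fst hx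
            simp only [box] at h1
            rw [G_head] at h1
            exact (Sum.inl_ne_inr h1.symm)
          · have h2 := congrArg Prod.snd hx
            simp only [box] at h2
            have := H_head_left β
            rw [h2] at this
            simp at this
      · rcases p2 with y | y
        · -- p = (inr, inl y) : has an in-arc with surviving tail
          cases u
          have hmu := bex_mu_notX y.1 y.2
          have hy : (⟨(Bex.mu y.1).2, (bex_facts y.1).2.2.2⟩ : {v : Fin 5 // v ∉ Xex}) = y :=
            Subtype.ext (congrArg Prod.snd hmu)
          have hx : (((Bex.contract Yex).inter (Bex.contract Xex)).mu (sy (qY 0) (qX y.1))).2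
              = (Sum.inr (), Sum.inl y) := by
            rw [inter_mu_sy]
            simp only [G_mu_qY, H_mu_qX]
            rw [hy]; rfl
          have := ih _ (hin _ hx)
          simp [Bad, inter_mu_sy, G_mu_qY, H_mu_qX] at this
        · exact hb rfl

open LDMG in
lemma bad_sub_rem (p : CVertex Yex × CVertex Xex) (hp : Bad p) :
    p ∈ vrspRem (Bex.contract Yex) (Bex.contract Xex) 1 := by
  rcases p with ⟨p1, p2⟩
  refine Or.inr ⟨?_, ?_⟩
  · -- positive level in the box product
    rcases p1 with u | u
    · rcases p2 with y | y
      · refine ⟨Sum.inr ((Sum.inl u), qX y.1), ?_⟩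
        have hmu := bex_mu_notX y.1 y.2
        have hy : (⟨(Bex.mu y.1).2, (bex_facts y.1).2.2.2⟩ : {v : Fin 5 // v ∉ Xex}) = y :=
          Subtype.ext (congrArg Prod.snd hmu)
        simp only [box, H_mu_qX]
        rw [hy]
      · exact absurd hp (by simp [Bad])
    · rcases p2 with y | y
      · exact absurd hp (by simp [Bad])
      · cases u
        refine ⟨Sum.inl (qY 0, Sum.inr y), ?_⟩
        simp only [box, G_mu_qY]
  · -- no in-arc in the intermediate product
    intro x hx
    exfalso
    obtain ⟨α, β, rfl⟩ := inter_arc_cases x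
    rw [inter_mu_sy] at hx
    have h1 := congrArg Prod.fst hx
    have h2 := congrArg Prod.snd hx
    simp only at h1 h2
    rw [G_head] at h1
    rcases p1 with u | u
    · exact Sum.inl_ne_inr h1.symm
    · have := H_head_left β
      rw [h2] at this
      rcases p2 with y | y
      · exact absurd hp (by simp [Bad])
      · simp at this

open LDMG in
lemma removed_iff (p : CVertex Yex × CVertex Xex) :
    p ∈ vrspRemoved (Bex.contract Yex) (Bex.contract Xex) ↔ Bad p := by
  constructor
  · intro hp
    obtain ⟨n, hn⟩ := Set.mem_iUnion.1 hp
    exact rem_sub_bad n p hn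
  · intro hp
    exact Set.mem_iUnion.2 ⟨1, bad_sub_rem p hp⟩

open LDMG in
lemma sy_tail_surv (α : CArc Bex Yex) (β : CArc Bex Xex) :
    ((((Bex.contract Yex)).inter (Bex.contract Xex)).mu (sy α β)).1 ∉
      vrspRemoved (Bex.contract Yex) (Bex.contract Xex) := by
  rw [removed_iff]
  simp [Bad, inter_mu_sy, G_tail_left, H_tail]

open LDMG in
lemma sy_head_surv (α : CArc Bex Yex) (β : CArc Bex Xex) :
    ((((Bex.contract Yex)).inter (Bex.contract Xex)).mu (sy α β)).2 ∉
      vrspRemoved (Bex.contract Yex) (Bex.contract Xex) := by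
  rw [removed_iff]
  simp [Bad, inter_mu_sy, G_head, H_head_left]


open LDMG in
lemma qY_inj {i j : Fin 5} (h : qY i = qY j) : (Bex.mu i).1 = (Bex.mu j).1 := by
  have h2 : cKey Bex Yex (aY i) = cKey Bex Yex (aY j) := Quotient.exact h
  rw [keyY, keyY] at h2
  exact congrArg Subtype.val (Sum.inl.inj (congrArg (fun z => z.1.1) h2))

open LDMG in
lemma qY_sound {i j : Fin 5} (h : (Bex.mu i).1 = (Bex.mu j).1) : qY i = qY j := by
  apply Quotient.sound
  show cKey Bex Yex (aY i) = cKey Bex Yex (aY j)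
  rw [keyY, keyY]
  simp [h]; rfl

open LDMG in
lemma qX_inj {i j : Fin 5} (h : qX i = qX j) : (Bex.mu i).2 = (Bex.mu j).2 := by
  have h2 : cKey Bex Xex (aX i) = cKey Bex Xex (aX j) := Quotient.exact h
  rw [keyX, keyX] at h2
  exact congrArg Subtype.val (Sum.inl.inj (congrArg (fun z => z.1.2) h2))

open LDMG in
lemma qX_sound {i j : Fin 5} (h : (Bex.mu i).2 = (Bex.mu j).2) : qX i = qX j := by
  apply Quotient.sound
  show cKey Bex Xex (aX i) = cKey Bex Xex (aX j)
  rw [keyX, keyX]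
  simp [h]; rfl

noncomputable def gY : Fin 2 → LDMG.CArc Bex Yex := fun i => if i = 0 then qY 0 else qY 2

noncomputable def gX : Fin 3 → LDMG.CArc Bex Xex := fun i => if i = 0 then qX 2 else if i = 1 then qX 3 else qX 4

open LDMG in
noncomputable def eY : Fin 2 ≃ CArc Bex Yex := by
  refine Equiv.ofBijective gY ⟨?_, ?_⟩
  · intro i j h
    fin_cases i <;> fin_cases j <;> simp [gY] at h ⊢ <;>
      exact absurd (qY_inj h) (by decide)
  · intro α
    induction α using carcY_ind with
    | _ i =>
      fin_cases i
      · exact ⟨0, by simp [gY]⟩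
      · exact ⟨0, by simp [gY]; exact qY_sound (by decide)⟩
      · exact ⟨1, by simp [gY]⟩
      · exact ⟨1, by simp [gY]; exact qY_sound (by decide)⟩
      · exact ⟨1, by simp [gY]; exact qY_sound (by decide)⟩

open LDMG in
noncomputable def eX : Fin 3 ≃ CArc Bex Xex := by
  refine Equiv.ofBijective gX ⟨?_, ?_⟩
  · intro i j h
    fin_cases i <;> fin_cases j <;> simp [gX] at h ⊢ <;>
      exact absurd (qX_inj h) (by decide)
  · intro α
    induction α using carcX_ind with
    | _ i =>
      fin_cases i
      · exact ⟨1, by simp [gX]; exact qX_sound (by decide)⟩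
      · exact ⟨2, by simp [gX]; exact qX_sound (by decide)⟩
      · exact ⟨0, by simp [gX]⟩
      · exact ⟨1, by simp [gX]⟩
      · exact ⟨2, by simp [gX]⟩

open LDMG in
lemma card_vrsparc : Nat.card (VrspArc (Bex.contract Yex) (Bex.contract Xex)) = 6 := by
  have e1 : VrspArc (Bex.contract Yex) (Bex.contract Xex) ≃
      InterArc (Bex.contract Yex) (Bex.contract Xex) :=
    Equiv.subtypeUnivEquiv (fun x => by
      obtain ⟨α, β, rfl⟩ := inter_arc_cases x
      exact ⟨sy_tail_surv α β, sy_head_surv α β⟩)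
  have e2 : InterArc (Bex.contract Yex) (Bex.contract Xex) ≃
      {p : CArc Bex Yex × CArc Bex Xex //
        (Bex.contract Yex).lab p.1 = (Bex.contract Xex).lab p.2} :=
    (Equiv.emptySum _ _).trans (Equiv.emptySum _ _)
  have e3 : {p : CArc Bex Yex × CArc Bex Xex //
        (Bex.contract Yex).lab p.1 = (Bex.contract Xex).lab p.2} ≃
      (CArc Bex Yex × CArc Bex Xex) :=
    Equiv.subtypeUnivEquiv (fun p => Subsingleton.elim _ _)
  have := Nat.card_congr (((e1.trans e2).trans e3).trans (eY.symm.prodCongr eX.symm))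
  simpa [Nat.card_eq_fintype_card] using this

open LDMG in
lemma step_bound {a b : Fin 5} (h : Bex.step a b) : a.val ≤ 1 ∧ 2 ≤ b.val := by
  obtain ⟨i, hi⟩ := h
  have h1 : (Bex.mu i).1 = a := congrArg Prod.fst hi
  have h2 : (Bex.mu i).2 = b := congrArg Prod.snd hi
  subst h1
  subst h2
  exact bex_tail_head i

end Aux

/-- There is a bipartite labelled acyclic directed graph `B(X,Y)`, all of whose arcs go
from `X` to `Y` and carry the same label, which is not complete bipartite and is not
isomorphic to `(B(X,Y)/Y) ⊟ (B(X,Y)/X)`: the above example has 5 arcs while the VRSP has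
6 arcs. -/
theorem counterexample_not_iso :
    (∀ a : Fin 5, (Bex.mu a).1 ∈ Xex ∧ (Bex.mu a).2 ∈ Yex) ∧
    Bex.Acyclic ∧
    (¬ ∀ x ∈ Xex, ∀ y ∈ Yex, ∃ a : Fin 5, Bex.mu a = (x, y)) ∧
    Nat.card (Fin 5) = 5 ∧
    Nat.card (LDMG.VrspArc (Bex.contract Yex) (Bex.contract Xex)) = 6 ∧
    ¬ LDMG.Iso Bex ((Bex.contract Yex).vrsp (Bex.contract Xex)) := by
  refine ⟨fun a => ⟨(bex_facts a).1, (bex_facts a).2.1⟩, ?_, ?_, by simp, card_vrsparc, ?_⟩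
  · -- acyclicity
    intro v hv
    have key : ∀ a b : Fin 5, Relation.TransGen Bex.step a b → a.val ≤ 1 ∧ 2 ≤ b.val := by
      intro a b h
      induction h with
      | single h => exact step_bound h
      | tail _ h ih => exact ⟨ih.1, (step_bound h).2⟩
    have := key v v hv
    omega
  · -- not complete bipartite
    intro h
    obtain ⟨a, ha⟩ := h 0 (by simp [Xex]) 2 (by simp [Yex])
    exact bex_not02 a ha
  · -- not isomorphic
    rintro ⟨φ, hφ⟩
    obtain ⟨b1, hb1, -⟩ := (hφ 0 3 ()).1 ⟨0, by decide, rfl⟩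
    obtain ⟨b2, hb2, -⟩ := (hφ 1 2 ()).1 ⟨2, by decide, rfl⟩
    obtain ⟨α, β, hab⟩ := inter_arc_cases b1.1
    obtain ⟨α', β', hab'⟩ := inter_arc_cases b2.1
    have v1 : (((Bex.contract Yex).inter (Bex.contract Xex)).mu b1.1).1 = (φ 0).1 :=
      congrArg Subtype.val (congrArg Prod.fst hb1)
    have v2 : (((Bex.contract Yex).inter (Bex.contract Xex)).mu b2.1).2 = (φ 2).1 :=
      congrArg Subtype.val (congrArg Prod.snd hb2)
    rw [hab, inter_mu_sy] at v1
    rw [hab', inter_mu_sy] at v2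
    have ht : (((Bex.contract Yex).inter (Bex.contract Xex)).mu (sy α β')).1 = (φ 0).1 := by
      rw [inter_mu_sy]
      rw [H_tail β] at v1
      rw [show (((Bex.contract Yex).mu α).1, ((Bex.contract Xex).mu β').1) =
        (((Bex.contract Yex).mu α).1, Sum.inr ()) by rw [H_tail β']; rfl]
      exact v1
    have hh : (((Bex.contract Yex).inter (Bex.contract Xex)).mu (sy α β')).2 = (φ 2).1 := by
      rw [inter_mu_sy]
      rw [G_head α'] at v2
      rw [show (((Bex.contract Yex).mu α).2, ((Bex.contract Xex).mu β').2) =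
        (Sum.inr (), ((Bex.contract Xex).mu β').2) by rw [G_head α]; rfl]
      exact v2
    have hmu : ((Bex.contract Yex).vrsp (Bex.contract Xex)).mu
        ⟨sy α β', sy_tail_surv α β', sy_head_surv α β'⟩ = (φ 0, φ 2) := by
      rw [Prod.ext_iff]
      exact ⟨Subtype.ext ht, Subtype.ext hh⟩
    obtain ⟨a, ha, -⟩ := (hφ 0 2 ()).2
      ⟨⟨sy α β', sy_tail_surv α β', sy_head_surv α β'⟩, hmu, Subsingleton.elim _ _⟩
    exact bex_not02 a ha
end

section
/- Let G and H be finite labelled acyclic directed multigraphs. Then the vertex-removing synchronised product G \boxbackslash H is acyclic, and every vertex of G \boxbackslash H that has in-degree 0 already had level 0 in the Cartesian product G \Box H. -/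
section Aux

open Relation

variable {V A L V' A' : Type}

/-- The combined "strictly forward" relation on pairs. -/
def SRel (G : LDMG V A L) (H : LDMG V' A' L) (p q : V × V') : Prop :=
  (TransGen G.step p.1 q.1 ∧ ReflTransGen H.step p.2 q.2) ∨
  (ReflTransGen G.step p.1 q.1 ∧ TransGen H.step p.2 q.2)

lemma inter_step_srel (G : LDMG V A L) (H : LDMG V' A' L) {p q : V × V'}
    (h : (G.inter H).step p q) : SRel G H p q := by
  obtain ⟨x, hx⟩ := h
  obtain ⟨p1, p2⟩ := p
  obtain ⟨q1, q2⟩ := q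
  rcases x with ⟨⟨a, w⟩, _⟩ | ⟨⟨u, b⟩, _⟩ | ⟨⟨a, b⟩, _⟩ <;>
    simp only [LDMG.inter, Prod.mk.injEq] at hx <;>
    obtain ⟨⟨e1, e2⟩, e3, e4⟩ := hx <;> subst e1 <;> subst e2 <;> subst e3 <;> subst e4
  · exact Or.inl ⟨Relation.TransGen.single ⟨a, rfl⟩, Relation.ReflTransGen.refl⟩
  · exact Or.inr ⟨Relation.ReflTransGen.refl, Relation.TransGen.single ⟨b, rfl⟩⟩
  · exact Or.inl ⟨Relation.TransGen.single ⟨a, rfl⟩, Relation.ReflTransGen.single ⟨b, rfl⟩⟩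

lemma srel_trans (G : LDMG V A L) (H : LDMG V' A' L) {p q r : V × V'}
    (h1 : SRel G H p q) (h2 : SRel G H q r) : SRel G H p r := by
  rcases h1 with ⟨a1, b1⟩ | ⟨a1, b1⟩ <;> rcases h2 with ⟨a2, b2⟩ | ⟨a2, b2⟩
  · exact Or.inl ⟨a1.trans a2, b1.trans b2⟩
  · exact Or.inl ⟨a1.trans_left a2, b1.trans b2.to_reflTransGen⟩
  · exact Or.inl ⟨TransGen.trans_right a1 a2, b1.to_reflTransGen.trans b2⟩
  · exact Or.inr ⟨a1.trans a2, b1.trans b2⟩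

lemma vrspRem_subset_succ (G : LDMG V A L) (H : LDMG V' A' L) (n : ℕ) :
    LDMG.vrspRem G H n ⊆ LDMG.vrspRem G H (n + 1) := fun _ h => Or.inl h

lemma vrspRem_mono (G : LDMG V A L) (H : LDMG V' A' L) : Monotone (LDMG.vrspRem G H) :=
  monotone_nat_of_le_succ (vrspRem_subset_succ G H)

lemma vrspRem_stab (G : LDMG V A L) (H : LDMG V' A' L) {n : ℕ}
    (h : LDMG.vrspRem G H (n + 1) = LDMG.vrspRem G H n) :
    ∀ m, n ≤ m → LDMG.vrspRem G H m = LDMG.vrspRem G H n := by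
  intro m hm
  induction m with
  | zero => rw [Nat.le_zero.mp hm]
  | succ k ih =>
    rcases Nat.lt_or_ge n (k + 1) with hlt | hge
    · have hk : LDMG.vrspRem G H k = LDMG.vrspRem G H n := ih (Nat.lt_succ_iff.mp hlt)
      calc LDMG.vrspRem G H (k + 1)
          = LDMG.vrspRem G H k ∪
            {v | LDMG.PosLevelBox G H v ∧
              ∀ x, ((G.inter H).mu x).2 = v → ((G.inter H).mu x).1 ∈ LDMG.vrspRem G H k} :=
            rfl
        _ = LDMG.vrspRem G H n := by rw [hk]; exact h
    · exact le_antisymm (vrspRem_mono G H hge) (vrspRem_mono G H hm)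

lemma vrspRem_exists_stab (G : LDMG V A L) (H : LDMG V' A' L)
    [Fintype V] [Fintype V'] :
    ∃ n, LDMG.vrspRem G H (n + 1) = LDMG.vrspRem G H n := by
  by_contra hcon
  push_neg at hcon
  have key : ∀ n, n ≤ (LDMG.vrspRem G H n).ncard := by
    intro n
    induction n with
    | zero => exact Nat.zero_le _
    | succ k ih =>
      have hss : LDMG.vrspRem G H k ⊂ LDMG.vrspRem G H (k + 1) :=
        ssubset_of_subset_of_ne (vrspRem_subset_succ G H k) (Ne.symm (hcon k))
      have := Set.ncard_lt_ncard hss (Set.toFinite _)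
      omega
  have h1 := key (Fintype.card (V × V') + 1)
  have h2 : (LDMG.vrspRem G H (Fintype.card (V × V') + 1)).ncard ≤ Fintype.card (V × V') := by
    have := Set.ncard_le_ncard
      (Set.subset_univ (LDMG.vrspRem G H (Fintype.card (V × V') + 1))) (Set.toFinite _)
    rwa [Set.ncard_univ, Nat.card_eq_fintype_card] at this
  omega

lemma transGen_srel (G : LDMG V A L) (H : LDMG V' A' L) {p q : V × V'}
    (h : Relation.TransGen (G.inter H).step p q) : SRel G H p q := by
  induction h with
  | single h => exact inter_step_srel G H h
  | tail _ h ih => exact srel_trans G H ih (inter_step_srel G H h)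

end Aux

/-- The vertex-removing synchronised product of finite labelled acyclic directed
multigraphs is acyclic, and every in-degree-0 vertex of `G ⊟ H` already had level 0 in
the Cartesian product `G □ H`. -/
theorem vrsp_acyclic_and_sources {V A L V' A' : Type}
    [Fintype V] [Fintype A] [Fintype V'] [Fintype A']
    (G : LDMG V A L) (H : LDMG V' A' L) (hG : G.Acyclic) (hH : H.Acyclic) :
    (G.vrsp H).Acyclic ∧
    ∀ v : LDMG.VrspV G H, (G.vrsp H).InDegZero v →
      ¬ LDMG.PosLevelBox G H (Subtype.val v) := by
  constructor
  · -- acyclicity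
    intro v hv
    have hlift : Relation.TransGen (G.inter H).step v.1 v.1 := by
      refine Relation.TransGen.lift Subtype.val (fun a b hab => ?_) _ _ hv
      obtain ⟨x, hx⟩ := hab
      refine ⟨x.1, ?_⟩
      have h1 : ((G.vrsp H).mu x).1 = a := congrArg Prod.fst hx
      have h2 : ((G.vrsp H).mu x).2 = b := congrArg Prod.snd hx
      have e1 : ((G.inter H).mu x.1).1 = a.1 := congrArg Subtype.val h1
      have e2 : ((G.inter H).mu x.1).2 = b.1 := congrArg Subtype.val h2
      exact Prod.ext e1 e2
    rcases transGen_srel G H hlift with ⟨h1, _⟩ | ⟨_, h2⟩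
    · exact hG _ h1
    · exact hH _ h2
  · -- sources
    intro v hdeg hpos
    obtain ⟨N, hN⟩ := vrspRem_exists_stab G H
    have hrem : LDMG.vrspRemoved G H = LDMG.vrspRem G H N := by
      apply le_antisymm
      · refine Set.iUnion_subset fun m => ?_
        rcases le_or_gt m N with hm | hm
        · exact vrspRem_mono G H hm
        · exact le_of_eq (vrspRem_stab G H hN m hm.le)
      · exact Set.subset_iUnion _ N
    have hvN : v.1 ∉ LDMG.vrspRem G H (N + 1) := fun h =>
      v.2 (Set.mem_iUnion.mpr ⟨N + 1, h⟩)
    have : ¬ (LDMG.PosLevelBox G H v.1 ∧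
        ∀ x, ((G.inter H).mu x).2 = v.1 → ((G.inter H).mu x).1 ∈ LDMG.vrspRem G H N) :=
      fun h => hvN (Or.inr h)
    push_neg at this
    obtain ⟨x, hxhead, hxtail⟩ := this hpos
    have htail : ((G.inter H).mu x).1 ∉ LDMG.vrspRemoved G H := by rw [hrem]; exact hxtail
    have hhead : ((G.inter H).mu x).2 ∉ LDMG.vrspRemoved G H := hxhead ▸ v.2
    exact hdeg ⟨x, htail, hhead⟩ (Subtype.ext hxhead)
end
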